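/- Let A ⊆ ℕ have positive lower density d, let r > 1 be a real number, and let N ≥ 1 be an integer. Then there exists a subset A' ⊆ A of positive lower density such that for all n, m ∈ A' with n ≠ m, one has |n - r·m| ≥ N. -/

import Mathlib

open scoped Classical

noncomputable def lowerDensity (A : Set ℕ) : ℝ :=
  Filter.liminf
    (fun N : ℕ => (((Finset.range (N + 1)).filter (· ∈ A)).card : ℝ) / (N : ℝ))
    Filter.atTop

set_option maxHeartbeats 1000000 in
theorem stmt_0 (A : Set ℕ) (hA : 0 < lowerDensity A) (r : ℝ) (hr : 1 < r)
    (N : ℕ) (hN : 1 ≤ N) :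
    ∃ A' : Set ℕ, A' ⊆ A ∧ 0 < lowerDensity A' ∧
      ∀ n ∈ A', ∀ m ∈ A', n ≠ m → (N : ℝ) ≤ |(n : ℝ) - r * (m : ℝ)| := by
  classical
  set c : ℕ → ℕ := fun M => ((Finset.range (M + 1)).filter (· ∈ A)).card with hcdef
  have hcmono : Monotone c := by
    intro a b hab
    exact Finset.card_le_card
      (Finset.filter_subset_filter _ (Finset.range_subset_range.mpr (by omega)))
  have hcle : ∀ M, c M ≤ M + 1 := fun M => by
    simpa using Finset.card_le_card (Finset.filter_subset _ (Finset.range (M + 1)))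
  set δ : ℝ := lowerDensity A / 2 with hδdef
  have hδ : 0 < δ := by positivity
  have hδd : δ < lowerDensity A := by simp only [hδdef]; linarith
  -- extract M₀
  have hev : ∀ᶠ M : ℕ in Filter.atTop, δ < (c M : ℝ) / M := by
    have hb : Filter.IsBoundedUnder (· ≥ ·) Filter.atTop
        (fun M : ℕ => (((Finset.range (M + 1)).filter (· ∈ A)).card : ℝ) / (M : ℝ)) :=
      Filter.isBoundedUnder_of ⟨0, fun M => by positivity⟩
    exact Filter.eventually_lt_of_lt_liminf hδd hb
  obtain ⟨M₁, hM₁⟩ := Filter.eventually_atTop.mp hev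
  set M₀ := max M₁ 1 with hM₀def
  have hM₀ : ∀ M, M₀ ≤ M → δ * M ≤ (c M : ℝ) := by
    intro M hM
    have h1 : (1 : ℕ) ≤ M := le_trans (le_max_right _ _) hM
    have hMpos : (0 : ℝ) < M := by exact_mod_cast h1
    have := hM₁ M (le_trans (le_max_left _ _) hM)
    rw [lt_div_iff₀ hMpos] at this
    linarith
  -- constants
  set ρ : ℝ := (1 + r) / 2 with hρdef
  have hρ1 : 1 < ρ := by simp only [hρdef]; linarith
  have hρr : ρ < r := by simp only [hρdef]; linarith
  obtain ⟨L₀, hL₀⟩ := pow_unbounded_of_one_lt (4 / δ) hρ1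
  set L := L₀ + 1 with hLdef
  have hL1 : 1 ≤ L := Nat.le_add_left 1 L₀
  have hL : 4 / δ < ρ ^ L := by
    refine lt_of_lt_of_le hL₀ ?_
    exact pow_le_pow_right₀ (le_of_lt hρ1) (Nat.le_succ L₀)
  have hLpos : (0 : ℝ) < L := by exact_mod_cast hL1
  set T₀ : ℕ := max M₀ ⌈((N : ℝ) + 1) / (r - ρ)⌉₊ with hT₀def
  have hT₀M₀ : M₀ ≤ T₀ := le_max_left _ _
  have hT₀1 : 1 ≤ T₀ := le_trans (le_max_right M₁ 1) hT₀M₀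
  have hrρ : (0 : ℝ) < r - ρ := by linarith
  have hT₀N : (N : ℝ) + 1 ≤ (r - ρ) * T₀ := by
    have h1 : ((N : ℝ) + 1) / (r - ρ) ≤ (⌈((N : ℝ) + 1) / (r - ρ)⌉₊ : ℝ) := Nat.le_ceil _
    have h2' : ⌈((N : ℝ) + 1) / (r - ρ)⌉₊ ≤ T₀ := le_max_right _ _
    have h2 : (⌈((N : ℝ) + 1) / (r - ρ)⌉₊ : ℝ) ≤ (T₀ : ℝ) := Nat.cast_le.mpr h2'
    have := le_trans h1 h2
    rw [div_le_iff₀ hrρ] at this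
    linarith
  -- the step lemma
  have hstep : ∀ T : ℕ, ∃ p : ℕ × ℕ, T₀ ≤ T →
      T ≤ p.1 ∧ p.1 < p.2 ∧ ((p.2 : ℝ) ≤ (2 * ρ) ^ L * T) ∧
        ((p.2 : ℝ) + N ≤ r * ((p.1 : ℝ) + 1)) ∧
        (2 * (T : ℝ) / L ≤ (c p.2 : ℝ) - (c p.1 : ℝ)) := by
    intro T
    by_cases hT : T₀ ≤ T
    swap
    · exact ⟨(0, 0), fun h => absurd h hT⟩
    have hT1 : 1 ≤ T := le_trans hT₀1 hT
    have hTpos : (0 : ℝ) < T := by exact_mod_cast hT1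
    set b : ℕ → ℕ := fun j => Nat.rec T (fun _ prev => ⌈ρ * (prev : ℝ)⌉₊) j with hbdef
    have hb0 : b 0 = T := rfl
    have hbs : ∀ j, b (j + 1) = ⌈ρ * ((b j : ℕ) : ℝ)⌉₊ := fun _ => rfl
    clear_value b
    have hρ0 : (0 : ℝ) < ρ := by linarith
    have hblb : ∀ j, ρ ^ j * T ≤ (b j : ℝ) := by
      intro j
      induction j with
      | zero => simp [hb0]
      | succ j ih =>
        have h1 : ρ * ((b j : ℕ) : ℝ) ≤ (⌈ρ * ((b j : ℕ) : ℝ)⌉₊ : ℝ) := Nat.le_ceil _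
        have h2 : ρ ^ (j + 1) * T = ρ * (ρ ^ j * T) := by ring
        rw [hbs j, h2]
        calc ρ * (ρ ^ j * T) ≤ ρ * (b j : ℝ) := by
              exact mul_le_mul_of_nonneg_left ih (le_of_lt hρ0)
          _ ≤ _ := h1
    have hbT : ∀ j, T ≤ b j := by
      intro j
      have hpj : (1 : ℝ) ≤ ρ ^ j := one_le_pow₀ (le_of_lt hρ1)
      have h1 : (T : ℝ) ≤ ρ ^ j * T := by nlinarith
      have := le_trans h1 (hblb j)
      exact_mod_cast this
    have hb1 : ∀ j, (1 : ℝ) ≤ (b j : ℝ) := by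
      intro j
      have := hbT j
      exact_mod_cast le_trans hT1 this
    have hbub : ∀ j, (b j : ℝ) ≤ (2 * ρ) ^ j * T := by
      intro j
      induction j with
      | zero => simp [hb0]
      | succ j ih =>
        rw [hbs j]
        have h0 : (0 : ℝ) ≤ ρ * (b j : ℝ) := by positivity
        have h1 : (⌈ρ * ((b j : ℕ) : ℝ)⌉₊ : ℝ) < ρ * (b j : ℝ) + 1 :=
          Nat.ceil_lt_add_one h0
        have h2 : ρ * (b j : ℝ) + 1 ≤ 2 * ρ * (b j : ℝ) := by
          nlinarith [hb1 j]
        have h3 : 2 * ρ * (b j : ℝ) ≤ 2 * ρ * ((2 * ρ) ^ j * T) := by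
          nlinarith
        have h4 : (2 * ρ) ^ (j + 1) * T = 2 * ρ * ((2 * ρ) ^ j * T) := by ring
        rw [h4]; linarith
    have hblt : ∀ j, b j < b (j + 1) := by
      intro j
      have h1 : ((b j : ℕ) : ℝ) < ρ * (b j : ℝ) := by nlinarith [hb1 j]
      have h2 : ρ * ((b j : ℕ) : ℝ) ≤ (⌈ρ * ((b j : ℕ) : ℝ)⌉₊ : ℝ) := Nat.le_ceil _
      have : ((b j : ℕ) : ℝ) < ((b (j + 1) : ℕ) : ℝ) := by rw [hbs j]; linarith
      exact_mod_cast this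
    -- total count
    have hkey : 2 * (T : ℝ) ≤ (c (b L) : ℝ) - (c (b 0) : ℝ) := by
      have hbLM₀ : M₀ ≤ b L := le_trans (le_trans hT₀M₀ hT) (hbT L)
      have h1 : δ * (b L : ℝ) ≤ (c (b L) : ℝ) := hM₀ _ hbLM₀
      have h2 : ρ ^ L * T ≤ (b L : ℝ) := hblb L
      have h3 : 4 * (T : ℝ) ≤ δ * (b L : ℝ) := by
        have h4 : 4 < δ * ρ ^ L := by
          rw [div_lt_iff₀ hδ] at hL; nlinarith
        nlinarith [mul_le_mul_of_nonneg_left h2 hδ.le, mul_lt_mul_of_pos_right h4 hTpos]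
      have h5 : (c (b 0) : ℝ) ≤ 2 * T := by
        rw [hb0]
        have := hcle T
        have : (c T : ℝ) ≤ (T : ℝ) + 1 := by exact_mod_cast this
        have hT1' : (1 : ℝ) ≤ (T : ℝ) := by exact_mod_cast hT1
        linarith
      linarith
    -- pigeonhole
    have hsum : ∑ j ∈ Finset.range L, ((c (b (j + 1)) : ℝ) - (c (b j) : ℝ))
        = (c (b L) : ℝ) - (c (b 0) : ℝ) :=
      Finset.sum_range_sub (fun j => (c (b j) : ℝ)) L
    have hex : ∃ j, j < L ∧ 2 * (T : ℝ) / L ≤ (c (b (j + 1)) : ℝ) - (c (b j) : ℝ) := by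
      by_contra h
      push_neg at h
      have hne : (Finset.range L).Nonempty := ⟨0, Finset.mem_range.mpr hL1⟩
      have hlt : ∑ j ∈ Finset.range L, ((c (b (j + 1)) : ℝ) - (c (b j) : ℝ))
          < ∑ j ∈ Finset.range L, 2 * (T : ℝ) / L := by
        refine Finset.sum_lt_sum_of_nonempty hne ?_
        intro j hj
        exact h j (Finset.mem_range.mp hj)
      have hconst : ∑ j ∈ Finset.range L, 2 * (T : ℝ) / L = 2 * T := by
        rw [Finset.sum_const, Finset.card_range, nsmul_eq_mul]
        field_simp
      rw [hsum, hconst] at hlt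
      linarith
    obtain ⟨j, hjL, hjcount⟩ := hex
    refine ⟨(b j, b (j + 1)), fun _ => ⟨hbT j, hblt j, ?_, ?_, hjcount⟩⟩
    · calc (b (j + 1) : ℝ) ≤ (2 * ρ) ^ (j + 1) * T := hbub (j + 1)
        _ ≤ (2 * ρ) ^ L * T := by
          have h1 : (1 : ℝ) ≤ 2 * ρ := by linarith
          have h2 : (2 * ρ) ^ (j + 1) ≤ (2 * ρ) ^ L := pow_le_pow_right₀ h1 hjL
          nlinarith
    · have h1 : (b (j + 1) : ℝ) < ρ * (b j : ℝ) + 1 := by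
        rw [hbs j]
        exact Nat.ceil_lt_add_one (by positivity)
      have h2 : (T₀ : ℝ) ≤ (b j : ℝ) := by
        exact_mod_cast le_trans hT (hbT j)
      have h3 : (r - ρ) * T₀ ≤ (r - ρ) * b j := by nlinarith
      have := hT₀N
      nlinarith
  choose P hP using hstep
  -- the recursion
  set TT : ℕ → ℕ := fun k =>
    Nat.rec T₀ (fun _ prev => ⌈r * (((P prev).2 : ℕ) : ℝ)⌉₊ + N + T₀) k with hTTdef
  set x : ℕ → ℕ := fun k => (P (TT k)).1 with hxdef
  set y : ℕ → ℕ := fun k => (P (TT k)).2 with hydef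
  have hTT0 : TT 0 = T₀ := rfl
  have hTTs : ∀ k, TT (k + 1) = ⌈r * ((y k : ℕ) : ℝ)⌉₊ + N + T₀ := fun _ => rfl
  have hTge : ∀ k, T₀ ≤ TT k := by
    intro k
    cases k with
    | zero => exact le_refl _
    | succ k => rw [hTTs k]; omega
  have hspec := fun k => hP (TT k) (hTge k)
  have hxT : ∀ k, TT k ≤ x k := fun k => (hspec k).1
  have hxy : ∀ k, x k < y k := fun k => (hspec k).2.1
  have hyub : ∀ k, (y k : ℝ) ≤ (2 * ρ) ^ L * TT k := fun k => (hspec k).2.2.1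
  have hgap : ∀ k, (y k : ℝ) + N ≤ r * ((x k : ℝ) + 1) := fun k => (hspec k).2.2.2.1
  have hcount : ∀ k, 2 * (TT k : ℝ) / L ≤ (c (y k) : ℝ) - (c (x k) : ℝ) :=
    fun k => (hspec k).2.2.2.2
  clear hspec
  clear_value TT x y
  have hr0 : (0 : ℝ) < r := by linarith
  have hTTlb : ∀ k, r * (y k : ℝ) + N + 1 ≤ (TT (k + 1) : ℝ) := by
    intro k
    rw [hTTs k]
    push_cast
    have h1 : r * ((y k : ℕ) : ℝ) ≤ (⌈r * ((y k : ℕ) : ℝ)⌉₊ : ℝ) := Nat.le_ceil _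
    have h2 : (1 : ℝ) ≤ (T₀ : ℝ) := by exact_mod_cast hT₀1
    linarith
  have hy1 : ∀ k, 1 ≤ y k := by
    intro k
    have h1 := hxy k
    have h2 := hxT k
    have h3 := hTge k
    omega
  have hymono : StrictMono y := by
    apply strictMono_nat_of_lt_succ
    intro k
    have h1 : (y k : ℝ) < (TT (k + 1) : ℝ) := by
      have := hTTlb k
      have hy0 : (0 : ℝ) ≤ (y k : ℝ) := Nat.cast_nonneg _
      nlinarith
    have h2 : y k < TT (k + 1) := by exact_mod_cast h1
    calc y k < TT (k + 1) := h2
      _ ≤ x (k + 1) := hxT (k + 1)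
      _ < y (k + 1) := hxy (k + 1)
  -- the set
  set A' : Set ℕ := {n | n ∈ A ∧ ∃ k, x k < n ∧ n ≤ y k} with hA'def
  have hA'sub : A' ⊆ A := fun n hn => hn.1
  -- separation claims
  have claimA : ∀ k l, k ≤ l → ∀ n m : ℕ, x k < n → n ≤ y k → x l < m → m ≤ y l →
      (n : ℝ) + N ≤ r * m := by
    intro k l hkl n m hn1 hn2 hm1 hm2
    rcases eq_or_lt_of_le hkl with heq | hlt
    · subst heq
      have h1 : (x k : ℝ) + 1 ≤ (m : ℝ) := by exact_mod_cast hm1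
      have h2 : (n : ℝ) ≤ (y k : ℝ) := by exact_mod_cast hn2
      have h3 : r * ((x k : ℝ) + 1) ≤ r * m := by nlinarith
      have := hgap k
      linarith
    · obtain ⟨l', rfl⟩ : ∃ l', l = l' + 1 := ⟨l - 1, by omega⟩
      have hkl' : k ≤ l' := by omega
      have h1 : (TT (l' + 1) : ℝ) ≤ (m : ℝ) := by
        have : TT (l' + 1) ≤ m := le_trans (hxT (l' + 1)) (le_of_lt hm1)
        exact_mod_cast this
      have h2 : (n : ℝ) ≤ (y l' : ℝ) := by
        have : n ≤ y l' := le_trans hn2 (hymono.le_iff_le.mpr hkl')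
        exact_mod_cast this
      have h3 : (y l' : ℝ) ≤ r * (y l' : ℝ) := by
        nlinarith [(Nat.cast_nonneg (y l') : (0:ℝ) ≤ _)]
      have h4 : (m : ℝ) ≤ r * m := by nlinarith [(Nat.cast_nonneg m : (0:ℝ) ≤ _)]
      have := hTTlb l'
      linarith
  have claimB : ∀ k l, k < l → ∀ n m : ℕ, x l < n → n ≤ y l → x k < m → m ≤ y k →
      r * (m : ℝ) + N ≤ n := by
    intro k l hkl n m hn1 hn2 hm1 hm2
    obtain ⟨l', rfl⟩ : ∃ l', l = l' + 1 := ⟨l - 1, by omega⟩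
    have hkl' : k ≤ l' := by omega
    have h1 : (TT (l' + 1) : ℝ) ≤ (n : ℝ) := by
      have : TT (l' + 1) ≤ n := le_trans (hxT (l' + 1)) (le_of_lt hn1)
      exact_mod_cast this
    have h2 : (m : ℝ) ≤ (y l' : ℝ) := by
      have : m ≤ y l' := le_trans hm2 (hymono.le_iff_le.mpr hkl')
      exact_mod_cast this
    have h3 : r * (m : ℝ) ≤ r * (y l' : ℝ) := by nlinarith
    have := hTTlb l'
    linarith
  -- density of A'
  set c' : ℕ → ℕ := fun M => ((Finset.range (M + 1)).filter (· ∈ A')).card with hc'def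
  set C : ℝ := (2 * ρ) ^ L * (r + N + T₀ + 1) * (2 * ρ) ^ L with hCdef
  have hCpos : 0 < C := by
    have h1 : (0 : ℝ) < 2 * ρ := by linarith
    have h2 : (0 : ℝ) < r + N + T₀ + 1 := by positivity
    positivity
  set ε : ℝ := 2 / (L * C) with hεdef
  have hεpos : 0 < ε := by positivity
  have hC0 : C ≠ 0 := ne_of_gt hCpos
  have hL0 : (L : ℝ) ≠ 0 := ne_of_gt hLpos
  clear_value C
  clear_value ε
  have hMbound : ∀ M : ℕ, y 0 ≤ M → ε ≤ (c' M : ℝ) / M := by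
    intro M hM
    set k := Nat.findGreatest (fun j => y j ≤ M) M with hkdef
    have hk1 : y k ≤ M :=
      Nat.findGreatest_spec (m := 0) (P := fun j => y j ≤ M) (Nat.zero_le M) hM
    have hk2 : M < y (k + 1) := by
      by_contra h
      push_neg at h
      have hle : k + 1 ≤ M := le_trans (hymono.le_apply) h
      have hlt : Nat.findGreatest (fun j => y j ≤ M) M < k + 1 := by omega
      exact Nat.findGreatest_is_greatest hlt hle h
    clear_value k
    -- count lower bound
    have hsub1 : (Finset.range (x k + 1)).filter (· ∈ A) ⊆
        (Finset.range (y k + 1)).filter (· ∈ A) :=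
      Finset.filter_subset_filter _ (Finset.range_subset_range.mpr (by have := hxy k; omega))
    have hsub2 : ((Finset.range (y k + 1)).filter (· ∈ A)) \
        ((Finset.range (x k + 1)).filter (· ∈ A)) ⊆
        (Finset.range (M + 1)).filter (· ∈ A') := by
      intro a ha
      rw [Finset.mem_sdiff, Finset.mem_filter, Finset.mem_range] at ha
      rw [Finset.mem_filter, Finset.mem_range]
      obtain ⟨⟨hay, haA⟩, hna⟩ := ha
      have hax : x k < a := by
        by_contra hax
        push_neg at hax
        exact hna (by rw [Finset.mem_filter, Finset.mem_range]; exact ⟨by omega, haA⟩)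
      exact ⟨by omega, haA, k, hax, by omega⟩
    have hcard : c (y k) - c (x k) ≤ c' M := by
      have h1 := Finset.card_le_card hsub2
      rw [Finset.card_sdiff_of_subset hsub1] at h1
      exact h1
    have hcastsub : ((c (y k) - c (x k) : ℕ) : ℝ) = (c (y k) : ℝ) - (c (x k) : ℝ) := by
      have := hcmono (le_of_lt (hxy k))
      push_cast [Nat.cast_sub this]
      ring
    have hc'lb : 2 * (TT k : ℝ) / L ≤ (c' M : ℝ) := by
      have h1 : ((c (y k) - c (x k) : ℕ) : ℝ) ≤ (c' M : ℝ) := by exact_mod_cast hcard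
      rw [hcastsub] at h1
      linarith [hcount k]
    -- upper bound on M
    have hMub : (M : ℝ) ≤ C * TT k := by
      have h1 : (M : ℝ) < (y (k + 1) : ℝ) := by exact_mod_cast hk2
      have h2 : (y (k + 1) : ℝ) ≤ (2 * ρ) ^ L * TT (k + 1) := hyub (k + 1)
      have h3 : (TT (k + 1) : ℝ) ≤ (r + N + T₀ + 1) * y k := by
        rw [hTTs k]
        push_cast
        have h4 : (⌈r * ((y k : ℕ) : ℝ)⌉₊ : ℝ) < r * (y k : ℝ) + 1 :=
          Nat.ceil_lt_add_one (by positivity)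
        have h5 : (1 : ℝ) ≤ (y k : ℝ) := by exact_mod_cast hy1 k
        nlinarith [(Nat.cast_nonneg N : (0:ℝ) ≤ _), (Nat.cast_nonneg T₀ : (0:ℝ) ≤ _)]
      have h6 : (y k : ℝ) ≤ (2 * ρ) ^ L * TT k := hyub k
      have h7 : (0 : ℝ) < (2 * ρ) ^ L := by positivity
      have h9 : (2 * ρ) ^ L * (TT (k + 1) : ℝ) ≤ (2 * ρ) ^ L * ((r + N + T₀ + 1) * y k) :=
        mul_le_mul_of_nonneg_left h3 h7.le
      have h10 : ((2 * ρ) ^ L * (r + N + T₀ + 1)) * (y k : ℝ)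
          ≤ ((2 * ρ) ^ L * (r + N + T₀ + 1)) * ((2 * ρ) ^ L * TT k) :=
        mul_le_mul_of_nonneg_left h6 (by positivity)
      calc (M : ℝ) ≤ (2 * ρ) ^ L * TT (k + 1) := le_trans h1.le h2
        _ ≤ (2 * ρ) ^ L * ((r + N + T₀ + 1) * y k) := h9
        _ = ((2 * ρ) ^ L * (r + N + T₀ + 1)) * (y k : ℝ) := by ring
        _ ≤ ((2 * ρ) ^ L * (r + N + T₀ + 1)) * ((2 * ρ) ^ L * TT k) := h10
        _ = C * TT k := by rw [hCdef]; ring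
    have hTTpos : (0 : ℝ) < TT k := by
      have := hTge k
      have : 1 ≤ TT k := le_trans hT₀1 this
      exact_mod_cast this
    have hMpos : (0 : ℝ) < M := by
      have h1 : 1 ≤ y 0 := hy1 0
      have : (1 : ℕ) ≤ M := le_trans h1 hM
      exact_mod_cast this
    rw [le_div_iff₀ hMpos]
    calc ε * M ≤ ε * (C * TT k) := mul_le_mul_of_nonneg_left hMub hεpos.le
      _ = 2 * (TT k : ℝ) / L := by
          rw [hεdef]
          field_simp
      _ ≤ (c' M : ℝ) := hc'lb
  refine ⟨A', hA'sub, ?_, ?_⟩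
  · -- positive lower density
    have hcob : Filter.IsCoboundedUnder (· ≥ ·) Filter.atTop
        (fun M : ℕ => (((Finset.range (M + 1)).filter (· ∈ A')).card : ℝ) / (M : ℝ)) := by
      apply Filter.IsBoundedUnder.isCoboundedUnder_ge
      refine Filter.isBoundedUnder_of ⟨2, fun M => ?_⟩
      rcases Nat.eq_zero_or_pos M with h0 | h1
      · subst h0; simp
      · have hMpos : (0 : ℝ) < M := by exact_mod_cast h1
        rw [div_le_iff₀ hMpos]
        have h2 : (((Finset.range (M + 1)).filter (· ∈ A')).card : ℝ) ≤ (M : ℝ) + 1 := by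
          exact_mod_cast Finset.card_le_card (Finset.filter_subset _ _) |>.trans
            (le_of_eq (Finset.card_range (M + 1)))
        have h3 : (1 : ℝ) ≤ M := by exact_mod_cast h1
        linarith
    have hevA' : ∀ᶠ M : ℕ in Filter.atTop,
        ε ≤ (((Finset.range (M + 1)).filter (· ∈ A')).card : ℝ) / (M : ℝ) := by
      rw [Filter.eventually_atTop]
      exact ⟨y 0, fun M hM => hMbound M hM⟩
    have := Filter.le_liminf_of_le hcob hevA'
    calc (0 : ℝ) < ε := hεpos
      _ ≤ lowerDensity A' := by
          unfold lowerDensity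
          convert this using 5 with M
          all_goals congr
  · -- separation
    intro n hn m hm _
    obtain ⟨hnA, kn, hkn1, hkn2⟩ := hn
    obtain ⟨hmA, km, hkm1, hkm2⟩ := hm
    rcases le_or_gt kn km with hle | hlt
    · have := claimA kn km hle n m hkn1 hkn2 hkm1 hkm2
      rw [le_abs]
      right
      linarith
    · have := claimB km kn hlt n m hkn1 hkn2 hkm1 hkm2
      rw [le_abs]
      left
      linarith
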